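/- The map (ξ,η) ↦ ((c_I/(R-a))(ξ-a) + ξ cos η, ξ sin η) is injective on (a,R) × (0,π) provided 0 < a < R and 0 ≤ c_I < R - a. -/
import Mathlib

lemma stmt_19_aux (k ξ₁ ξ₂ x₁ x₂ : ℝ) (hk0 : 0 ≤ k) (hk1 : k < 1)
    (h1 : 0 < ξ₁) (h2 : 0 < ξ₂)
    (hb1 : |x₁| ≤ ξ₁) (hb2 : |x₂| ≤ ξ₂)
    (hy : ξ₁ ^ 2 - x₁ ^ 2 = ξ₂ ^ 2 - x₂ ^ 2)
    (he : k * ξ₁ + x₁ = k * ξ₂ + x₂) (hlt : ξ₁ < ξ₂) : False := by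
  have a1 := abs_le.1 hb1
  have a2 := abs_le.1 hb2
  nlinarith [mul_pos (sub_pos.2 hlt) (add_pos h1 h2),
    mul_nonneg hk0 (sub_pos.2 hlt).le, sq_nonneg (x₁ + x₂), sq_nonneg (x₁ - x₂)]

theorem stmt_19 (a R cI : ℝ) (ha : 0 < a) (haR : a < R)
    (hc0 : 0 ≤ cI) (hc : cI < R - a) :
    Set.InjOn
      (fun p : ℝ × ℝ =>
        (cI / (R - a) * (p.1 - a) + p.1 * Real.cos p.2, p.1 * Real.sin p.2))
      (Set.Ioo a R ×ˢ Set.Ioo (0 : ℝ) Real.pi) := by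
  rintro ⟨ξ₁, η₁⟩ ⟨⟨hξ₁a, hξ₁R⟩, hη₁0, hη₁π⟩ ⟨ξ₂, η₂⟩ ⟨⟨hξ₂a, hξ₂R⟩, hη₂0, hη₂π⟩ h
  simp only [Prod.mk.injEq] at h
  obtain ⟨h1, h2⟩ := h
  set k := cI / (R - a) with hk
  have hRa : (0:ℝ) < R - a := by linarith
  have hk0 : 0 ≤ k := div_nonneg hc0 hRa.le
  have hk1 : k < 1 := (div_lt_one hRa).2 hc
  have hξ₁ : 0 < ξ₁ := ha.trans hξ₁a
  have hξ₂ : 0 < ξ₂ := ha.trans hξ₂a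
  set x₁ := ξ₁ * Real.cos η₁ with hx₁
  set x₂ := ξ₂ * Real.cos η₂ with hx₂
  have hb1 : |x₁| ≤ ξ₁ := by
    rw [hx₁, abs_mul, abs_of_pos hξ₁]
    nlinarith [Real.abs_cos_le_one η₁]
  have hb2 : |x₂| ≤ ξ₂ := by
    rw [hx₂, abs_mul, abs_of_pos hξ₂]
    nlinarith [Real.abs_cos_le_one η₂]
  have hy : ξ₁ ^ 2 - x₁ ^ 2 = ξ₂ ^ 2 - x₂ ^ 2 := by
    have s1 := Real.sin_sq_add_cos_sq η₁
    have s2 := Real.sin_sq_add_cos_sq η₂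
    have hss : (ξ₁ * Real.sin η₁) ^ 2 = (ξ₂ * Real.sin η₂) ^ 2 := by rw [h2]
    rw [hx₁, hx₂]
    linear_combination hss - ξ₁ ^ 2 * s1 + ξ₂ ^ 2 * s2
  have he : k * ξ₁ + x₁ = k * ξ₂ + x₂ := by
    have : k * (ξ₁ - a) + x₁ = k * (ξ₂ - a) + x₂ := h1
    linarith
  have hξ : ξ₁ = ξ₂ := by
    rcases lt_trichotomy ξ₁ ξ₂ with hlt | heq | hgt
    · exact absurd (stmt_19_aux k ξ₁ ξ₂ x₁ x₂ hk0 hk1 hξ₁ hξ₂ hb1 hb2 hy he hlt) id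
    · exact heq
    · exact absurd (stmt_19_aux k ξ₂ ξ₁ x₂ x₁ hk0 hk1 hξ₂ hξ₁ hb2 hb1 hy.symm he.symm hgt) id
  have hcos : Real.cos η₁ = Real.cos η₂ := by
    have : x₁ = x₂ := by rw [hξ] at he; linarith
    rw [hx₁, hx₂, hξ] at this
    exact mul_left_cancel₀ hξ₂.ne' this
  have hη : η₁ = η₂ := Real.injOn_cos ⟨hη₁0.le, hη₁π.le⟩ ⟨hη₂0.le, hη₂π.le⟩ hcos
  exact Prod.ext hξ hη
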